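/- Let μ be a centred probability measure on ℝ with distribution function F, b < 0 < b̄, and let ξ ∈ (F(b),1] satisfy ∫(x−b) dμ_{F(b)}^ξ = −b. Then the measure σ = (μ^{F(b)} + μ_ξ)/(F(b) + 1 − ξ) is a probability measure with barycentre b, i.e. ∫(x−b)(μ^{F(b)} + μ_ξ)(dx) = 0. -/

import Mathlib

open MeasureTheory Set

/-- Distribution function of `μ`. -/
noncomputable def distF (μ : Measure ℝ) (x : ℝ) : ℝ := (μ (Iic x)).toReal

/-- Left limit `F(x-)` of the distribution function. -/
noncomputable def distFm (μ : Measure ℝ) (x : ℝ) : ℝ := (μ (Iio x)).toReal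

/-- Quantile function of `μ`. -/
noncomputable def quantile (μ : Measure ℝ) (u : ℝ) : ℝ :=
  sInf {x : ℝ | u ≤ distF μ x}

/-- The sub-probability measure `μ_p^q`, i.e. `μ` restricted to its quantile range `(p,q]`,
realised as the image under the quantile function of Lebesgue measure on `(p,q]`. -/
noncomputable def qmeas (μ : Measure ℝ) (p q : ℝ) : Measure ℝ :=
  (volume.restrict (Ioc p q)).map (quantile μ)

/-- `m̃_p^q = ∫ x dμ_p^q`. -/
noncomputable def mtil (μ : Measure ℝ) (p q : ℝ) : ℝ :=
  ∫ u in Ioc p q, quantile μ u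

/-- The barycentre `m_p^q` of `μ` restricted to the quantile range `(p,q]`. -/
noncomputable def bary (μ : Measure ℝ) (p q : ℝ) : ℝ :=
  if p < q then (q - p)⁻¹ * mtil μ p q else quantile μ q

open ProbabilityTheory Filter

section Aux

variable (μ : Measure ℝ) [IsProbabilityMeasure μ]

lemma distF_eq_cdf (x : ℝ) : distF μ x = cdf μ x := (cdf_eq_real μ x).symm

lemma distF_mono : Monotone (distF μ) := by
  intro x y h
  rw [distF_eq_cdf, distF_eq_cdf]
  exact monotone_cdf μ h

lemma quantile_le_iff {u x : ℝ} (hu0 : 0 < u) (hu1 : u < 1) :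
    quantile μ u ≤ x ↔ u ≤ distF μ x := by
  have hmono : Monotone (distF μ) := distF_mono μ
  set S : Set ℝ := {y | u ≤ distF μ y} with hS
  have hne : S.Nonempty := by
    obtain ⟨y, hy⟩ := ((tendsto_cdf_atTop μ).eventually_const_lt hu1).exists
    exact ⟨y, by rw [hS, mem_setOf_eq, distF_eq_cdf]; exact hy.le⟩
  have hbdd : BddBelow S := by
    obtain ⟨y, hy⟩ := ((tendsto_cdf_atBot μ).eventually_lt_const hu0).exists
    refine ⟨y, fun z hz => ?_⟩
    by_contra hzy
    push_neg at hzy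
    have : distF μ z ≤ distF μ y := hmono hzy.le
    rw [distF_eq_cdf μ y] at this
    exact absurd (le_trans hz this) (not_le.mpr hy)
  have hmem : sInf S ∈ S := by
    by_contra h
    rw [hS, mem_setOf_eq, not_le, distF_eq_cdf] at h
    have hev : ∀ᶠ y in nhdsWithin (sInf S) (Ici (sInf S)), cdf μ y < u :=
      ((cdf μ).right_continuous (sInf S)).eventually_lt_const h
    obtain ⟨b, hb, hsub⟩ := mem_nhdsGE_iff_exists_Ico_subset.mp hev
    obtain ⟨z, hzS, hzb⟩ := (csInf_lt_iff hbdd hne).mp hb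
    have hz1 : sInf S ≤ z := csInf_le hbdd hzS
    have : cdf μ z < u := hsub ⟨hz1, hzb⟩
    rw [hS, mem_setOf_eq, distF_eq_cdf] at hzS
    exact absurd hzS (not_le.mpr this)
  constructor
  · intro h
    exact le_trans hmem (hmono h)
  · intro h
    exact csInf_le hbdd h

/-- A measurable version of the quantile function. -/
noncomputable def qg (μ : Measure ℝ) : ℝ → ℝ := (Ioo 0 1).indicator (quantile μ)

lemma measurable_qg : Measurable (qg μ) := by
  apply measurable_of_Iic
  intro x
  have hpre : qg μ ⁻¹' Iic x =
      (Ioo 0 1 ∩ Iic (distF μ x)) ∪ (if 0 ≤ x then (Ioo (0:ℝ) 1)ᶜ else ∅) := by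
    ext u
    by_cases hu : u ∈ Ioo (0:ℝ) 1
    · have hn1 : ¬ (1:ℝ) ≤ u := not_le.mpr hu.2
      have hu0 : (0:ℝ) < u := hu.1
      simp only [mem_preimage, qg, indicator_of_mem hu, mem_Iic, mem_union, mem_inter_iff, hu,
        true_and, mem_compl_iff, not_true_eq_false]
      rw [quantile_le_iff μ hu.1 hu.2]
      split_ifs <;> simp [mem_Ioo] <;> tauto
    · simp only [mem_preimage, qg, indicator_of_notMem hu, mem_Iic, mem_union, mem_inter_iff, hu,
        false_and, false_or, mem_compl_iff, not_false_eq_true]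
      split_ifs with hx <;> simp [hu, hx]
  rw [hpre]
  refine (measurableSet_Ioo.inter measurableSet_Iic).union ?_
  split_ifs
  · exact measurableSet_Ioo.compl
  · exact MeasurableSet.empty

lemma quantile_ae_eq {p q : ℝ} (hp : 0 ≤ p) (hq : q ≤ 1) :
    quantile μ =ᵐ[volume.restrict (Ioc p q)] qg μ := by
  rw [Filter.EventuallyEq, ae_iff]
  rw [Measure.restrict_apply' measurableSet_Ioc]
  refine measure_mono_null (t := {(1:ℝ)}) (fun u hu => ?_) Real.volume_singleton
  obtain ⟨hne, hu⟩ := hu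
  simp only [mem_setOf_eq] at hne
  have h0u : 0 < u := lt_of_le_of_lt hp hu.1
  have hu1 : u ≤ 1 := le_trans hu.2 hq
  rcases lt_or_eq_of_le hu1 with h | h
  · have he : qg μ u = quantile μ u :=
      indicator_of_mem (mem_Ioo.mpr ⟨h0u, h⟩) (quantile μ)
    exact absurd he.symm hne
  · exact mem_singleton_iff.mpr h

lemma map_qg : (volume.restrict (Ioc 0 1)).map (qg μ) = μ := by
  have hg := measurable_qg μ
  haveI : IsFiniteMeasure (volume.restrict (Ioc (0:ℝ) 1)) :=
    ⟨by rw [Measure.restrict_apply_univ, Real.volume_Ioc]; exact ENNReal.ofReal_lt_top⟩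
  refine Measure.ext_of_Iic _ μ fun x => ?_
  rw [Measure.map_apply hg measurableSet_Iic,
    Measure.restrict_apply (hg measurableSet_Iic)]
  have h1 : volume (qg μ ⁻¹' Iic x ∩ Ioc 0 1) = volume (qg μ ⁻¹' Iic x ∩ Ioo 0 1) :=
    measure_congr (ae_eq_set_inter (ae_eq_refl _) Ioo_ae_eq_Ioc.symm)
  have h2 : qg μ ⁻¹' Iic x ∩ Ioo 0 1 = Iic (distF μ x) ∩ Ioo 0 1 := by
    ext u
    simp only [mem_inter_iff, mem_preimage, mem_Iic]
    constructor
    · rintro ⟨h, hu⟩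
      rw [qg, indicator_of_mem hu] at h
      exact ⟨(quantile_le_iff μ hu.1 hu.2).mp h, hu⟩
    · rintro ⟨h, hu⟩
      refine ⟨?_, hu⟩
      rw [qg, indicator_of_mem hu]
      exact (quantile_le_iff μ hu.1 hu.2).mpr h
  have hc0 : 0 ≤ distF μ x := ENNReal.toReal_nonneg
  have hc1 : distF μ x ≤ 1 := by rw [distF_eq_cdf]; exact cdf_le_one μ x
  rw [h1, h2]
  have h3 : volume (Iic (distF μ x) ∩ Ioo 0 1) = ENNReal.ofReal (distF μ x) := by
    rcases lt_or_eq_of_le hc1 with h | h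
    · have he : Iic (distF μ x) ∩ Ioo 0 1 = Ioc 0 (distF μ x) := by
        ext u
        simp only [mem_inter_iff, mem_Iic, mem_Ioo, mem_Ioc]
        constructor
        · rintro ⟨h1, h2, h3⟩; exact ⟨h2, h1⟩
        · rintro ⟨h1, h2⟩; exact ⟨h2, h1, lt_of_le_of_lt h2 h⟩
      rw [he, Real.volume_Ioc, sub_zero]
    · have he : Iic (distF μ x) ∩ Ioo 0 1 = Ioo 0 1 := by
        rw [inter_eq_right]
        intro u hu
        rw [mem_Iic, h]
        exact hu.2.le
      rw [he, Real.volume_Ioo, h]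
      norm_num
  rw [h3, distF_eq_cdf, ofReal_cdf]

end Aux

theorem stmt11 (μ : Measure ℝ) [IsProbabilityMeasure μ]
    (hint : Integrable id μ) (hcent : ∫ x, x ∂μ = 0)
    (lb ub : ℝ) (hlb : lb < 0) (hub : 0 < ub)
    (ξ : ℝ) (hξ : ξ ∈ Ioc (distF μ lb) 1)
    (hξeq : (∫ u in Ioc (distF μ lb) ξ, (quantile μ u - lb)) = -lb)
    (hpos : 0 < distF μ lb + 1 - ξ) :
    IsProbabilityMeasure
      ((ENNReal.ofReal (distF μ lb + 1 - ξ))⁻¹ •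
        (qmeas μ 0 (distF μ lb) + qmeas μ ξ 1)) ∧
    (∫ x, (x - lb) ∂(qmeas μ 0 (distF μ lb) + qmeas μ ξ 1)) = 0 := by
  obtain ⟨hflbξ, hξ1⟩ := hξ
  set flb := distF μ lb with hflb
  have hflb0 : 0 ≤ flb := ENNReal.toReal_nonneg
  have hflb1 : flb ≤ 1 := le_trans hflbξ.le hξ1
  have hξ0 : 0 ≤ ξ := le_trans hflb0 hflbξ.le
  have hg := measurable_qg μ
  have hq1 : qmeas μ 0 flb = (volume.restrict (Ioc 0 flb)).map (qg μ) :=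
    Measure.map_congr (quantile_ae_eq μ le_rfl hflb1)
  have hq2 : qmeas μ ξ 1 = (volume.restrict (Ioc ξ 1)).map (qg μ) :=
    Measure.map_congr (quantile_ae_eq μ hξ0 le_rfl)
  have hmap := map_qg μ
  -- integrability of qg on (0,1]
  have hgint : IntegrableOn (qg μ) (Ioc 0 1) volume := by
    have h0 : Integrable id ((volume.restrict (Ioc (0:ℝ) 1)).map (qg μ)) := by rwa [hmap]
    have := (integrable_map_measure aestronglyMeasurable_id hg.aemeasurable).mp h0
    simpa [Function.comp, IntegrableOn] using this
  have hint1 : IntegrableOn (qg μ) (Ioc 0 flb) volume :=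
    hgint.mono_set (Ioc_subset_Ioc le_rfl hflb1)
  have hint2 : IntegrableOn (qg μ) (Ioc flb ξ) volume :=
    hgint.mono_set (Ioc_subset_Ioc hflb0 hξ1)
  have hint3 : IntegrableOn (qg μ) (Ioc ξ 1) volume :=
    hgint.mono_set (Ioc_subset_Ioc hξ0 le_rfl)
  have hint12 : IntegrableOn (qg μ) (Ioc 0 ξ) volume :=
    hgint.mono_set (Ioc_subset_Ioc le_rfl hξ1)
  -- total integral is 0
  have htot : ∫ u in Ioc (0:ℝ) 1, qg μ u = 0 := by
    have h := integral_map (φ := qg μ) (μ := volume.restrict (Ioc (0:ℝ) 1))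
      hg.aemeasurable (f := fun x => x) aestronglyMeasurable_id
    rw [hmap] at h
    rw [← h]
    exact hcent
  set A := ∫ u in Ioc (0:ℝ) flb, qg μ u with hA
  set B := ∫ u in Ioc flb ξ, qg μ u with hB
  set C := ∫ u in Ioc ξ 1, qg μ u with hC
  have hsplit : A + B + C = 0 := by
    have h12 : ∫ u in Ioc (0:ℝ) ξ, qg μ u = A + B := by
      rw [← Ioc_union_Ioc_eq_Ioc hflb0 hflbξ.le]
      exact setIntegral_union (Set.Ioc_disjoint_Ioc_of_le le_rfl) measurableSet_Ioc hint1 hint2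
    have h123 : ∫ u in Ioc (0:ℝ) 1, qg μ u = (A + B) + C := by
      rw [← Ioc_union_Ioc_eq_Ioc hξ0 hξ1,
        setIntegral_union (Set.Ioc_disjoint_Ioc_of_le le_rfl) measurableSet_Ioc hint12 hint3, h12]
    rw [htot] at h123
    linarith
  -- value of B from the hypothesis
  have hconst2 : IntegrableOn (fun _ : ℝ => lb) (Ioc flb ξ) volume :=
    (integrableOn_const_iff).mpr (Or.inr (by rw [Real.volume_Ioc]; exact ENNReal.ofReal_lt_top))
  have hBeq : B = lb * (ξ - flb - 1) := by
    have hcong : ∫ u in Ioc flb ξ, (quantile μ u - lb) = ∫ u in Ioc flb ξ, (qg μ u - lb) := by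
      refine integral_congr_ae ?_
      filter_upwards [quantile_ae_eq μ hflb0 hξ1] with u hu
      rw [hu]
    have hsub : ∫ u in Ioc flb ξ, (qg μ u - lb) = B - (ξ - flb) * lb := by
      rw [integral_sub hint2 hconst2, setIntegral_const,
        Real.volume_real_Ioc_of_le (by linarith), smul_eq_mul]
    have h := hξeq
    rw [hcong, hsub] at h
    linear_combination h
  -- integrability of x - lb w.r.t. each qmeas
  have hsm : AEStronglyMeasurable (fun x : ℝ => x - lb)
      ((volume.restrict (Ioc (0:ℝ) flb)).map (qg μ)) :=
    (measurable_id.sub measurable_const).aestronglyMeasurable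
  have hsm2 : AEStronglyMeasurable (fun x : ℝ => x - lb)
      ((volume.restrict (Ioc ξ 1)).map (qg μ)) :=
    (measurable_id.sub measurable_const).aestronglyMeasurable
  have hconst1 : IntegrableOn (fun _ : ℝ => lb) (Ioc 0 flb) volume :=
    (integrableOn_const_iff).mpr (Or.inr (by rw [Real.volume_Ioc]; exact ENNReal.ofReal_lt_top))
  have hconst3 : IntegrableOn (fun _ : ℝ => lb) (Ioc ξ 1) volume :=
    (integrableOn_const_iff).mpr (Or.inr (by rw [Real.volume_Ioc]; exact ENNReal.ofReal_lt_top))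
  have hintq1 : Integrable (fun x => x - lb) (qmeas μ 0 flb) := by
    rw [hq1, integrable_map_measure hsm hg.aemeasurable]
    exact hint1.sub hconst1
  have hintq2 : Integrable (fun x => x - lb) (qmeas μ ξ 1) := by
    rw [hq2, integrable_map_measure hsm2 hg.aemeasurable]
    exact hint3.sub hconst3
  -- the two integrals
  have e1 : ∫ x, (x - lb) ∂(qmeas μ 0 flb) = A - flb * lb := by
    rw [hq1, integral_map hg.aemeasurable hsm, integral_sub hint1 hconst1,
      setIntegral_const, Real.volume_real_Ioc_of_le (by linarith),
      smul_eq_mul, sub_zero]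
  have e2 : ∫ x, (x - lb) ∂(qmeas μ ξ 1) = C - (1 - ξ) * lb := by
    rw [hq2, integral_map hg.aemeasurable hsm2, integral_sub hint3 hconst3,
      setIntegral_const, Real.volume_real_Ioc_of_le (by linarith),
      smul_eq_mul]
  constructor
  · constructor
    rw [Measure.smul_apply, Measure.add_apply, hq1, hq2,
      Measure.map_apply hg MeasurableSet.univ, Measure.map_apply hg MeasurableSet.univ,
      preimage_univ, Measure.restrict_apply_univ, Measure.restrict_apply_univ,
      Real.volume_Ioc, Real.volume_Ioc, sub_zero,
      ← ENNReal.ofReal_add hflb0 (by linarith)]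
    have he : flb + (1 - ξ) = flb + 1 - ξ := by ring
    rw [he, smul_eq_mul]
    exact ENNReal.inv_mul_cancel (by simpa using hpos) ENNReal.ofReal_ne_top
  · rw [integral_add_measure hintq1 hintq2, e1, e2]
    linear_combination hsplit - hBeq
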